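/- Suppose R = log m > H_p(x|y). Then there exists a constant K > 0 such that for every n ≥ 1 and every integer Δ with 0 ≤ Δ ≤ n−1, the probability that there exists a string x̃ ∈ X^n lying in the same bin as the source string x^n, differing from x^n in at least one of the first n−Δ positions, and satisfying p(x̃, y^n) ≥ p(x^n, y^n), is at most K·exp(−Δ·E_{ML,SI}(R)), where E_{ML,SI}(R) = sup_{ρ∈[0,1]} [ρR − log Σ_{y∈Y} (Σ_{x∈X} p(x,y)^{1/(1+ρ)})^{1+ρ}]. -/

import Mathlib

open Classical
open scoped BigOperators

noncomputable section

/-- `q` is a probability mass function on `Z`. -/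
def IsPMF {Z : Type*} [Fintype Z] (q : Z → ℝ) : Prop :=
  (∀ z, 0 ≤ q z) ∧ ∑ z, q z = 1

/-- The probability of the event `A` on a finite outcome space with weights `P`. -/
def prob {Ω : Type*} [Fintype Ω] (P : Ω → ℝ) (A : Ω → Prop) : ℝ :=
  ∑ ω, if A ω then P ω else 0

/-- A causal random binning scheme of length `n` with `m` bins: the `j`-th bin index of a
string is a function of its length-`(j+1)` prefix. -/
abbrev BinScheme (X : Type*) (n m : ℕ) : Type _ :=
  (j : Fin n) → (Fin (j.val + 1) → X) → Fin m

/-- The length-`(j+1)` prefix of a string of length `n`. -/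
def pref {X : Type*} {n : ℕ} (w : Fin n → X) (j : Fin n) : Fin (j.val + 1) → X :=
  fun i => w ⟨i.val, lt_of_le_of_lt (Nat.lt_succ_iff.mp i.isLt) j.isLt⟩

/-- Two strings lie in the same bin iff all their bin indices agree. -/
def sameBin {X : Type*} {n m : ℕ} (b : BinScheme X n m) (w x : Fin n → X) : Prop :=
  ∀ j : Fin n, b j (pref w j) = b j (pref x j)

/-- Shannon entropy in nats. -/
def entropy {Z : Type*} [Fintype Z] (q : Z → ℝ) : ℝ :=
  - ∑ z, q z * Real.log (q z)

/-- Marginal on the second coordinate. -/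
def margY {X Y : Type*} [Fintype X] (q : X × Y → ℝ) : Y → ℝ := fun y => ∑ x, q (x, y)

/-- Marginal on the first coordinate. -/
def margX {X Y : Type*} [Fintype Y] (q : X × Y → ℝ) : X → ℝ := fun x => ∑ y, q (x, y)

/-- Conditional entropy `H_q(x|y) = H(q) − H(q_Y)` of the first coordinate given the
second, under the joint pmf `q`. -/
def condEntXY {X Y : Type*} [Fintype X] [Fintype Y] (q : X × Y → ℝ) : ℝ :=
  entropy q - entropy (margY q)

/-- Conditional entropy `H_q(y|x) = H(q) − H(q_X)` of the second coordinate given the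
first, under the joint pmf `q`. -/
def condEntYX {X Y : Type*} [Fintype X] [Fintype Y] (q : X × Y → ℝ) : ℝ :=
  entropy q - entropy (margX q)

/-- `E_{ML,SI}(R) = sup_{ρ ∈ [0,1]} [ρR − log Σ_y (Σ_x p(x,y)^{1/(1+ρ)})^{1+ρ}]`. -/
def EMLSI {X Y : Type*} [Fintype X] [Fintype Y] (p : X × Y → ℝ) (R : ℝ) : ℝ :=
  sSup ((fun ρ : ℝ =>
    ρ * R - Real.log (∑ y, (∑ x, p (x, y) ^ (1 / (1 + ρ))) ^ (1 + ρ))) '' Set.Icc 0 1)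

set_option linter.unusedSectionVars false
set_option maxHeartbeats 1000000

open Finset Real Filter

namespace St4

lemma card_eq_pair {A : Type*} [Fintype A] [DecidableEq A] {u v : A} (huv : u ≠ v) (m : ℕ)
    (hm : 1 ≤ m) :
    (∑ g : A → Fin m, if g u = g v then (1:ℝ) else 0)
      = (Fintype.card (A → Fin m) : ℝ) * (m:ℝ)⁻¹ := by
  have h1 : (∑ g : A → Fin m, if g u = g v then (1:ℝ) else 0)
      = ((Finset.univ.filter (fun g : A → Fin m => g u = g v)).card : ℝ) := by
    rw [Finset.sum_boole]
  have e : {g : A → Fin m // g u = g v} ≃ ({a : A // a ≠ v} → Fin m) :=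
    { toFun := fun g a => g.1 a.1
      invFun := fun h => ⟨fun a => if ha : a = v then h ⟨u, huv⟩ else h ⟨a, ha⟩, by
        dsimp only
        rw [dif_neg huv, dif_pos rfl]⟩
      left_inv := by
        rintro ⟨g, hg⟩
        ext a
        dsimp only
        by_cases ha : a = v
        · rw [dif_pos ha, ha, ← hg]
        · rw [dif_neg ha]
      right_inv := by
        intro h
        funext a
        dsimp only
        rw [dif_neg a.2] }
  have h2 : (Finset.univ.filter (fun g : A → Fin m => g u = g v)).card
      = Fintype.card {g : A → Fin m // g u = g v} := (Fintype.card_subtype _).symm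
  have h3 : Fintype.card {g : A → Fin m // g u = g v} = m ^ (Fintype.card A - 1) := by
    rw [Fintype.card_congr e, Fintype.card_fun, Fintype.card_fin,
      Fintype.card_subtype_compl, Fintype.card_subtype_eq]
  have hA : 1 ≤ Fintype.card A := Fintype.card_pos_iff.mpr ⟨u⟩
  have h4 : Fintype.card (A → Fin m) = m ^ Fintype.card A := by
    rw [Fintype.card_fun, Fintype.card_fin]
  rw [h1, h2, h3, h4]
  have hm0 : (m:ℝ) ≠ 0 := by positivity
  have : Fintype.card A = (Fintype.card A - 1) + 1 := (Nat.sub_add_cancel hA).symm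
  rw [this, pow_succ]
  push_cast
  field_simp

lemma pref_eq_iff {X : Type*} {n : ℕ} (x' x : Fin n → X) (j : Fin n) :
    pref x' j = pref x j ↔ ∀ i : Fin n, i.val ≤ j.val → x' i = x i := by
  constructor
  · intro h i hij
    have := congrFun h ⟨i.val, Nat.lt_succ_of_le hij⟩
    simpa [pref, Fin.eta] using this
  · intro h
    funext i
    exact h ⟨i.val, lt_of_le_of_lt (Nat.lt_succ_iff.mp i.isLt) j.isLt⟩ (Nat.lt_succ_iff.mp i.isLt)

lemma bin_count {X : Type*} [Fintype X] [DecidableEq X] {n m : ℕ} (hm : 1 ≤ m)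
    (x' x : Fin n → X) :
    (∑ b : BinScheme X n m, if sameBin b x' x then (1:ℝ) else 0)
      = (Fintype.card (BinScheme X n m) : ℝ) *
        ∏ j : Fin n, (if pref x' j = pref x j then (1:ℝ) else (m:ℝ)⁻¹) := by
  have h1 : ∀ b : BinScheme X n m, (if sameBin b x' x then (1:ℝ) else 0)
      = ∏ j : Fin n, (if b j (pref x' j) = b j (pref x j) then (1:ℝ) else 0) := by
    intro b
    rw [Finset.prod_boole]
    by_cases hsb : sameBin b x' x
    · rw [if_pos hsb, if_pos (fun j _ => hsb j)]
    · rw [if_neg hsb, if_neg (fun h' => hsb (fun j => h' j (Finset.mem_univ j)))]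
  calc (∑ b : BinScheme X n m, if sameBin b x' x then (1:ℝ) else 0)
      = ∑ b : BinScheme X n m, ∏ j : Fin n,
          (if b j (pref x' j) = b j (pref x j) then (1:ℝ) else 0) :=
        Finset.sum_congr rfl (fun b _ => h1 b)
    _ = ∏ j : Fin n, ∑ g : (Fin (j.val+1) → X) → Fin m,
          (if g (pref x' j) = g (pref x j) then (1:ℝ) else 0) := by
        conv_rhs => rw [Finset.prod_univ_sum]
        rw [Fintype.piFinset_univ]
    _ = ∏ j : Fin n, ((Fintype.card ((Fin (j.val+1) → X) → Fin m) : ℝ) *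
          (if pref x' j = pref x j then (1:ℝ) else (m:ℝ)⁻¹)) := by
        refine Finset.prod_congr rfl (fun j _ => ?_)
        by_cases hpe : pref x' j = pref x j
        · simp [hpe]
        · rw [card_eq_pair hpe m hm, if_neg hpe]
    _ = (Fintype.card (BinScheme X n m) : ℝ) *
        ∏ j : Fin n, (if pref x' j = pref x j then (1:ℝ) else (m:ℝ)⁻¹) := by
        rw [Finset.prod_mul_distrib]
        congr 1
        rw [← Nat.cast_prod, ← Fintype.card_pi]

lemma rpow_add_le_add_rpow' {x y ρ : ℝ} (hx : 0 ≤ x) (hy : 0 ≤ y) (h0 : 0 ≤ ρ) (h1 : ρ ≤ 1) :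
    (x + y) ^ ρ ≤ x ^ ρ + y ^ ρ := by
  lift x to NNReal using hx
  lift y to NNReal using hy
  have := NNReal.rpow_add_le_add_rpow x y h0 h1
  have h2 : ((x + y : NNReal) : ℝ) ^ ρ ≤ (((x ^ ρ + y ^ ρ : NNReal)) : ℝ) := by
    exact_mod_cast NNReal.coe_le_coe.mpr this
  push_cast [NNReal.coe_rpow] at h2 ⊢
  exact h2

lemma rpow_sum_le {ι : Type*} (s : Finset ι) (hs : s.Nonempty) (f : ι → ℝ)
    (hf : ∀ i ∈ s, 0 ≤ f i) {ρ : ℝ} (h0 : 0 ≤ ρ) (h1 : ρ ≤ 1) :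
    (∑ i ∈ s, f i) ^ ρ ≤ ∑ i ∈ s, (f i) ^ ρ := by
  induction hs using Finset.Nonempty.cons_induction with
  | singleton i => simp
  | cons i s hi hs ih =>
      rw [Finset.sum_cons, Finset.sum_cons]
      calc (f i + ∑ j ∈ s, f j) ^ ρ ≤ (f i) ^ ρ + (∑ j ∈ s, f j) ^ ρ :=
            rpow_add_le_add_rpow' (hf i (Finset.mem_cons_self i s))
              (Finset.sum_nonneg (fun j hj => hf j (Finset.mem_cons_of_mem hj))) h0 h1
        _ ≤ (f i) ^ ρ + ∑ j ∈ s, (f j) ^ ρ := by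
            have := ih (fun j hj => hf j (Finset.mem_cons_of_mem hj))
            linarith

lemma min_one_le_rpow {a ρ : ℝ} (ha : 0 ≤ a) (h0 : 0 ≤ ρ) (h1 : ρ ≤ 1) :
    min 1 a ≤ a ^ ρ := by
  rcases eq_or_lt_of_le ha with h|h
  · rw [← h]
    rcases eq_or_lt_of_le h0 with h'|h'
    · simp [← h']
    · rw [Real.zero_rpow (ne_of_gt h')]
      simp
  rcases le_total a 1 with h2|h2
  · calc min 1 a ≤ a := min_le_right _ _
      _ = a ^ (1:ℝ) := (Real.rpow_one a).symm
      _ ≤ a ^ ρ := Real.rpow_le_rpow_of_exponent_ge h h2 h1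
  · calc min 1 a ≤ 1 := min_le_left _ _
      _ ≤ a ^ ρ := Real.one_le_rpow h2 h0

lemma geom_le {r : ℝ} (h0 : 0 ≤ r) (h1 : r < 1) (M : ℕ) :
    ∑ t ∈ Finset.range M, r ^ (M - t) ≤ (1 - r)⁻¹ := by
  have key : ∑ t ∈ Finset.range M, r ^ (M - t) = ∑ t ∈ Finset.range M, r ^ (t + 1) := by
    rw [← Finset.sum_range_reflect]
    refine Finset.sum_congr rfl (fun j hj => ?_)
    rw [Finset.mem_range] at hj
    congr 1
    omega
  rw [key]
  calc ∑ t ∈ Finset.range M, r ^ (t + 1) ≤ ∑ t ∈ Finset.range M, r ^ t := by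
        refine Finset.sum_le_sum (fun t _ => ?_)
        exact pow_le_pow_of_le_one h0 h1.le (by omega)
    _ ≤ ∑' t : ℕ, r ^ t :=
        Summable.sum_le_tsum (Finset.range M) (fun i _ => pow_nonneg h0 i)
          (summable_geometric_of_lt_one h0 h1)
    _ = (1 - r)⁻¹ := tsum_geometric_of_lt_one h0 h1

lemma one_le_rpow_self {a q : ℝ} (ha : 1 ≤ a) (hq : 0 ≤ q) : 1 ≤ a ^ q :=
  Real.one_le_rpow ha hq


variable {X Y : Type*} [Fintype X] [Fintype Y] [DecidableEq X] [Nonempty X] [Nonempty Y]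

lemma exists_pos_coord (p : X × Y → ℝ) (hp : IsPMF p) : ∃ z, 0 < p z := by
  by_contra h
  push_neg at h
  have h2 : ∑ z, p z ≤ 0 := Finset.sum_nonpos (fun z _ => h z)
  rw [hp.2] at h2
  linarith

/-- positivity of the Gallager function -/
lemma F_pos (p : X × Y → ℝ) (hp : IsPMF p) {ρ : ℝ} (hρ : -1 < ρ) :
    0 < ∑ y, (∑ x, p (x, y) ^ (1 / (1 + ρ))) ^ (1 + ρ) := by
  obtain ⟨⟨x0, y0⟩, hz0⟩ := exists_pos_coord p hp
  have h1ρ : (0:ℝ) < 1 + ρ := by linarith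
  have hq : (0:ℝ) < 1 / (1 + ρ) := by positivity
  have hSnn : ∀ y, 0 ≤ ∑ x, p (x, y) ^ (1 / (1 + ρ)) :=
    fun y => Finset.sum_nonneg (fun x _ => Real.rpow_nonneg (hp.1 _) _)
  have hS0 : 0 < ∑ x, p (x, y0) ^ (1 / (1 + ρ)) := by
    have := Finset.single_le_sum (f := fun x => p (x, y0) ^ (1 / (1 + ρ)))
      (fun x _ => Real.rpow_nonneg (hp.1 _) _) (Finset.mem_univ x0)
    have h2 : 0 < p (x0, y0) ^ (1 / (1 + ρ)) := Real.rpow_pos_of_pos hz0 _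
    linarith
  have hterm : 0 < (∑ x, p (x, y0) ^ (1 / (1 + ρ))) ^ (1 + ρ) := Real.rpow_pos_of_pos hS0 _
  have := Finset.single_le_sum (f := fun y => (∑ x, p (x, y) ^ (1 / (1 + ρ))) ^ (1 + ρ))
    (fun y _ => Real.rpow_nonneg (hSnn y) _) (Finset.mem_univ y0)
  linarith

lemma S_continuousAt (p : X × Y → ℝ) {ρ0 : ℝ} (hρ0 : -1 < ρ0) (y : Y) :
    ContinuousAt (fun ρ : ℝ => ∑ x, p (x, y) ^ (1 / (1 + ρ))) ρ0 := by
  have h1ρ : (0:ℝ) < 1 + ρ0 := by linarith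
  refine tendsto_finset_sum _ (fun x _ => ?_)
  refine ContinuousAt.rpow continuousAt_const ?_ (Or.inr (by positivity))
  exact ContinuousAt.div continuousAt_const (continuousAt_const.add continuousAt_id)
    (ne_of_gt h1ρ)

lemma F_continuousAt (p : X × Y → ℝ) {ρ0 : ℝ} (hρ0 : -1 < ρ0) :
    ContinuousAt (fun ρ : ℝ => ∑ y, (∑ x, p (x, y) ^ (1 / (1 + ρ))) ^ (1 + ρ)) ρ0 := by
  have h1ρ : (0:ℝ) < 1 + ρ0 := by linarith
  refine tendsto_finset_sum _ (fun y _ => ?_)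
  exact ContinuousAt.rpow (S_continuousAt p hρ0 y)
    (continuousAt_const.add continuousAt_id) (Or.inr h1ρ)

lemma S_at_zero (p : X × Y → ℝ) (y : Y) :
    (∑ x, p (x, y) ^ (1 / (1 + (0:ℝ)))) = margY p y := by
  simp [margY]

lemma coord_hasDerivAt (p : X × Y → ℝ) (hp : IsPMF p) (z : X × Y) :
    HasDerivAt (fun ρ : ℝ => p z ^ (1 / (1 + ρ))) (-(p z * Real.log (p z))) 0 := by
  rcases (hp.1 z).eq_or_lt with h | h
  · -- p z = 0
    have hev : (fun ρ : ℝ => p z ^ (1 / (1 + ρ))) =ᶠ[nhds (0:ℝ)] (fun _ => (0:ℝ)) := by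
      filter_upwards [Ioo_mem_nhds (by norm_num : (-1:ℝ) < 0) (by norm_num : (0:ℝ) < 1)]
        with ρ hρ
      have h1ρ : (0:ℝ) < 1 + ρ := by linarith [hρ.1]
      rw [← h, Real.zero_rpow (by positivity : 1 / (1 + ρ) ≠ 0)]
    have := (hasDerivAt_const (0:ℝ) (0:ℝ)).congr_of_eventuallyEq hev
    rw [show -(p z * Real.log (p z)) = 0 by rw [← h]; simp]
    exact this
  · -- p z > 0
    have heq : (fun ρ : ℝ => p z ^ (1 / (1 + ρ)))
        = fun ρ => Real.exp (Real.log (p z) * (1 / (1 + ρ))) :=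
      funext fun ρ => Real.rpow_def_of_pos h _
    rw [heq]
    have h0 : HasDerivAt (fun ρ : ℝ => 1 + ρ) 1 0 := by
      simpa using (hasDerivAt_id (0:ℝ)).const_add 1
    have h1 : HasDerivAt (fun ρ : ℝ => (1 + ρ)⁻¹) (-1) 0 := by
      have := h0.fun_inv (by norm_num)
      rw [show (-1:ℝ) = -1 / (1 + 0) ^ 2 by norm_num]
      exact this
    have h2 : HasDerivAt (fun ρ : ℝ => Real.log (p z) * (1 + ρ)⁻¹)
        (Real.log (p z) * (-1)) 0 := h1.const_mul _
    have h3 := h2.exp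
    have hval : Real.exp (Real.log (p z) * (1 + (0:ℝ))⁻¹) = p z := by
      norm_num [Real.exp_log h]
    simp only [one_div]
    convert h3 using 1
    rw [hval]
    ring

lemma S_hasDerivAt (p : X × Y → ℝ) (hp : IsPMF p) (y : Y) :
    HasDerivAt (fun ρ : ℝ => ∑ x, p (x, y) ^ (1 / (1 + ρ)))
      (∑ x, -(p (x, y) * Real.log (p (x, y)))) 0 :=
  HasDerivAt.fun_sum (fun x _ => coord_hasDerivAt p hp (x, y))

lemma psi_hasDerivAt (p : X × Y → ℝ) (hp : IsPMF p) (y : Y) :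
    HasDerivAt (fun ρ : ℝ => (∑ x, p (x, y) ^ (1 / (1 + ρ))) ^ (1 + ρ))
      (margY p y * Real.log (margY p y) + ∑ x, -(p (x, y) * Real.log (p (x, y)))) 0 := by
  rcases eq_or_lt_of_le (Finset.sum_nonneg (fun x (_ : x ∈ univ) => hp.1 (x, y)) :
      0 ≤ margY p y) with h | h
  · -- margY p y = 0 : all p (x,y) = 0
    have hzero : ∀ x, p (x, y) = 0 := by
      intro x
      have := (Finset.sum_eq_zero_iff_of_nonneg (fun x (_ : x ∈ univ) => hp.1 (x, y))).mp h.symm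
      exact this x (Finset.mem_univ x)
    have hev : (fun ρ : ℝ => (∑ x, p (x, y) ^ (1 / (1 + ρ))) ^ (1 + ρ))
        =ᶠ[nhds (0:ℝ)] (fun _ => (0:ℝ)) := by
      filter_upwards [Ioo_mem_nhds (by norm_num : (-1:ℝ) < 0) (by norm_num : (0:ℝ) < 1)]
        with ρ hρ
      have h1ρ : (0:ℝ) < 1 + ρ := by linarith [hρ.1]
      have hS : (∑ x, p (x, y) ^ (1 / (1 + ρ))) = 0 := by
        refine Finset.sum_eq_zero (fun x _ => ?_)
        rw [hzero x, Real.zero_rpow (by positivity : 1 / (1 + ρ) ≠ 0)]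
      rw [hS, Real.zero_rpow (ne_of_gt h1ρ)]
    have := (hasDerivAt_const (0:ℝ) (0:ℝ)).congr_of_eventuallyEq hev
    rw [show margY p y * Real.log (margY p y) + ∑ x, -(p (x, y) * Real.log (p (x, y))) = 0 by
      simp [margY, hzero]]
    exact this
  · -- margY p y > 0
    have hS0pos : 0 < ∑ x, p (x, y) ^ (1 / (1 + (0:ℝ))) := by rw [S_at_zero]; exact h
    have hev : ∀ᶠ ρ in nhds (0:ℝ), 0 < ∑ x, p (x, y) ^ (1 / (1 + ρ)) :=
      (S_continuousAt p (by norm_num) y).eventually (lt_mem_nhds hS0pos)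
    have heq : (fun ρ : ℝ => (∑ x, p (x, y) ^ (1 / (1 + ρ))) ^ (1 + ρ))
        =ᶠ[nhds (0:ℝ)]
        (fun ρ => Real.exp (Real.log (∑ x, p (x, y) ^ (1 / (1 + ρ))) * (1 + ρ))) := by
      filter_upwards [hev] with ρ hρ
      exact Real.rpow_def_of_pos hρ _
    have hlog : HasDerivAt (fun ρ : ℝ => Real.log (∑ x, p (x, y) ^ (1 / (1 + ρ))))
        ((∑ x, -(p (x, y) * Real.log (p (x, y)))) / (∑ x, p (x, y) ^ (1 / (1 + (0:ℝ))))) 0 :=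
      (S_hasDerivAt p hp y).log (ne_of_gt hS0pos)
    have h1 : HasDerivAt (fun ρ : ℝ => 1 + ρ) 1 0 := by
      simpa using (hasDerivAt_id (0:ℝ)).const_add 1
    have hmul := hlog.fun_mul h1
    have h3 := hmul.exp
    refine HasDerivAt.congr_of_eventuallyEq (h3.congr_deriv ?_) heq
    rw [S_at_zero] at *
    have hexp : Real.exp (Real.log (margY p y) * (1 + 0)) = margY p y := by
      norm_num [Real.exp_log hS0pos]
    rw [hexp]
    field_simp
    ring

lemma sum_margY (p : X × Y → ℝ) : ∑ y, margY p y = ∑ z, p z := by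
  rw [Fintype.sum_prod_type]
  simp only [margY]
  exact Finset.sum_comm

lemma sum_sum_log (p : X × Y → ℝ) :
    ∑ y, ∑ x, p (x, y) * Real.log (p (x, y)) = ∑ z, p z * Real.log (p z) := by
  rw [Fintype.sum_prod_type]
  exact Finset.sum_comm

lemma F_at_zero (p : X × Y → ℝ) (hp : IsPMF p) :
    (∑ y, (∑ x, p (x, y) ^ (1 / (1 + (0:ℝ)))) ^ (1 + (0:ℝ))) = 1 := by
  have : ∀ y : Y, (∑ x, p (x, y) ^ (1 / (1 + (0:ℝ)))) ^ (1 + (0:ℝ)) = margY p y := by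
    intro y
    rw [S_at_zero]
    norm_num
  rw [Finset.sum_congr rfl (fun y _ => this y), sum_margY, hp.2]

/-- The key analytic fact: the Gallager exponent function has positive value somewhere on
`(0,1]`, and its sup over `[0,1]` is attained and positive. -/
lemma exists_max (p : X × Y → ℝ) (hp : IsPMF p) (R : ℝ) (hRH : condEntXY p < R) :
    ∃ ρ ∈ Set.Icc (0:ℝ) 1,
      EMLSI p R = ρ * R - Real.log (∑ y, (∑ x, p (x, y) ^ (1 / (1 + ρ))) ^ (1 + ρ)) ∧
      0 < EMLSI p R := by
  set F : ℝ → ℝ := fun ρ => ∑ y, (∑ x, p (x, y) ^ (1 / (1 + ρ))) ^ (1 + ρ) with hF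
  set f : ℝ → ℝ := fun ρ => ρ * R - Real.log (F ρ) with hf
  have hEdef : EMLSI p R = sSup (f '' Set.Icc 0 1) := rfl
  -- derivative of F at 0
  set D : ℝ := ∑ y, (margY p y * Real.log (margY p y) +
      ∑ x, -(p (x, y) * Real.log (p (x, y)))) with hD
  have hFd : HasDerivAt F D 0 := HasDerivAt.fun_sum (fun y _ => psi_hasDerivAt p hp y)
  have hF0 : F 0 = 1 := F_at_zero p hp
  have hfd : HasDerivAt f (R - D) 0 := by
    have h1 : HasDerivAt (fun ρ : ℝ => ρ * R) R 0 := by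
      simpa using (hasDerivAt_id (0:ℝ)).mul_const R
    have h2 : HasDerivAt (fun ρ : ℝ => Real.log (F ρ)) (D / F 0) 0 :=
      hFd.log (by rw [hF0]; norm_num)
    rw [hF0] at h2
    have := h1.fun_sub h2
    simpa using this
  have hDval : D = condEntXY p := by
    rw [hD, condEntXY, entropy, entropy]
    rw [Finset.sum_add_distrib]
    simp only [Finset.sum_neg_distrib]
    rw [sum_sum_log]
    ring
  have hderivpos : 0 < R - D := by rw [hDval]; linarith
  have hf0 : f 0 = 0 := by
    rw [hf]
    simp only
    rw [hF0, Real.log_one]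
    ring
  -- find ρ1 ∈ (0,1) with f ρ1 > 0
  have hslope := hasDerivAt_iff_tendsto_slope.mp hfd
  have ev1 : ∀ᶠ ρ in nhdsWithin (0:ℝ) {(0:ℝ)}ᶜ, 0 < slope f 0 ρ :=
    hslope.eventually (lt_mem_nhds hderivpos)
  have hmono : nhdsWithin (0:ℝ) (Set.Ioi 0) ≤ nhdsWithin (0:ℝ) {(0:ℝ)}ᶜ :=
    nhdsWithin_mono 0 (fun x hx => ne_of_gt hx)
  have ev2 : ∀ᶠ ρ in nhdsWithin (0:ℝ) (Set.Ioi 0), 0 < slope f 0 ρ := hmono ev1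
  have ev3 : ∀ᶠ ρ in nhdsWithin (0:ℝ) (Set.Ioi 0), ρ < 1 :=
    eventually_nhdsWithin_of_eventually_nhds (gt_mem_nhds one_pos)
  have ev4 : ∀ᶠ ρ in nhdsWithin (0:ℝ) (Set.Ioi 0), ρ ∈ Set.Ioi (0:ℝ) :=
    self_mem_nhdsWithin
  obtain ⟨ρ1, ⟨hρ1s, hρ1lt⟩, hρ1pos⟩ := ((ev2.and ev3).and ev4).exists
  have hρ1pos' : (0:ℝ) < ρ1 := hρ1pos
  have hfρ1 : 0 < f ρ1 := by
    have : slope f 0 ρ1 = (f ρ1 - f 0) / (ρ1 - 0) := slope_def_field f 0 ρ1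
    rw [this, hf0, sub_zero, sub_zero] at hρ1s
    have := mul_pos hρ1s hρ1pos'
    rwa [div_mul_cancel₀ _ (ne_of_gt hρ1pos')] at this
  -- max of f on [0,1]
  have hfc : ContinuousOn f (Set.Icc 0 1) := by
    intro ρ0 hρ0
    have h1 : (-1:ℝ) < ρ0 := by linarith [hρ0.1]
    refine ContinuousAt.continuousWithinAt ?_
    refine ContinuousAt.sub (continuousAt_id.mul continuousAt_const) ?_
    exact (F_continuousAt p h1).log (ne_of_gt (F_pos p hp h1))
  obtain ⟨ρs, hρs, hmax⟩ := isCompact_Icc.exists_isMaxOn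
    (Set.nonempty_Icc.mpr (by norm_num)) hfc
  have hbdd : BddAbove (f '' Set.Icc 0 1) := by
    refine ⟨f ρs, ?_⟩
    rintro _ ⟨a, ha, rfl⟩
    exact hmax ha
  have hsup : sSup (f '' Set.Icc 0 1) = f ρs :=
    le_antisymm (csSup_le (Set.Nonempty.image f (Set.nonempty_Icc.mpr (by norm_num)))
        (by rintro _ ⟨a, ha, rfl⟩; exact hmax ha))
      (le_csSup hbdd (Set.mem_image_of_mem f hρs))
  refine ⟨ρs, hρs, ?_, ?_⟩
  · rw [hEdef, hsup]
  · rw [hEdef, hsup]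
    have hρ1m : ρ1 ∈ Set.Icc (0:ℝ) 1 := ⟨le_of_lt hρ1pos', le_of_lt hρ1lt⟩
    exact lt_of_lt_of_le hfρ1 (hmax hρ1m)


lemma prod_ite_lt (n t : ℕ) (c : ℝ) :
    ∏ j : Fin n, (if (j:ℕ) < t then (1:ℝ) else c) = c ^ (n - t) := by
  rw [Fin.prod_univ_eq_prod_range (fun j => if j < t then (1:ℝ) else c) n]
  rw [Finset.prod_ite]
  rw [Finset.prod_const_one, one_mul, Finset.prod_const]
  congr 1
  have h : (Finset.range n).filter (fun j => ¬ j < t) = Finset.Ico t n := by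
    ext j
    simp only [Finset.mem_filter, Finset.mem_range, Finset.mem_Ico, not_lt]
    omega
  rw [h, Nat.card_Ico]

lemma pow_rpow_comm {x : ℝ} (hx : 0 ≤ x) (k : ℕ) (ρ : ℝ) :
    (x ^ k) ^ ρ = (x ^ ρ) ^ k := by
  rw [← Real.rpow_natCast x k, ← Real.rpow_mul hx, mul_comm, Real.rpow_mul hx,
    Real.rpow_natCast]

/-- The single-coordinate Gallager identity. -/
lemma sum_G (p : X × Y → ℝ) (hp : IsPMF p) {ρ : ℝ} (hρ0 : 0 ≤ ρ) :
    ∑ z : X × Y, p z * ((∑ a, p (a, z.2) ^ (1/(1+ρ))) / (p z) ^ (1/(1+ρ))) ^ ρ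
      = ∑ y, (∑ x, p (x, y) ^ (1 / (1 + ρ))) ^ (1 + ρ) := by
  have h1ρ : (0:ℝ) < 1 + ρ := by linarith
  set q : ℝ := 1/(1+ρ) with hqdef
  have hq0 : 0 < q := by positivity
  have hSnn : ∀ b : Y, 0 ≤ ∑ a, p (a, b) ^ q :=
    fun b => Finset.sum_nonneg (fun a _ => Real.rpow_nonneg (hp.1 _) _)
  have hstep : ∀ z : X × Y,
      p z * ((∑ a, p (a, z.2) ^ q) / (p z) ^ q) ^ ρ
        = p z ^ q * (∑ a, p (a, z.2) ^ q) ^ ρ := by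
    intro z
    rcases (hp.1 z).eq_or_lt with h | h
    · rw [← h]
      rw [Real.zero_rpow (ne_of_gt hq0)]
      ring
    · have hexp : 1 - q * ρ = q := by
        rw [hqdef]
        field_simp
        ring
    
      rw [Real.div_rpow (hSnn z.2) (Real.rpow_nonneg (hp.1 z) q)]
      rw [← Real.rpow_mul (hp.1 z) q ρ]
      rw [div_eq_mul_inv, ← Real.rpow_neg (hp.1 z)]
      calc p z * ((∑ a, p (a, z.2) ^ q) ^ ρ * p z ^ (-(q*ρ)))
          = (∑ a, p (a, z.2) ^ q) ^ ρ * (p z ^ (1:ℝ) * p z ^ (-(q*ρ))) := by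
            rw [Real.rpow_one]; ring
        _ = (∑ a, p (a, z.2) ^ q) ^ ρ * p z ^ (1 - q*ρ) := by
            rw [← Real.rpow_add h, ← sub_eq_add_neg]
        _ = p z ^ q * (∑ a, p (a, z.2) ^ q) ^ ρ := by rw [hexp]; ring
  rw [Finset.sum_congr rfl (fun z _ => hstep z)]
  rw [Fintype.sum_prod_type]
  rw [Finset.sum_comm]
  refine Finset.sum_congr rfl (fun b _ => ?_)
  have : ∑ a : X, p (a, b) ^ q * (∑ a', p (a', b) ^ q) ^ ρ
      = (∑ a : X, p (a, b) ^ q) * (∑ a', p (a', b) ^ q) ^ ρ := by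
    rw [← Finset.sum_mul]
  rw [this]
  rcases (hSnn b).eq_or_lt with h | h
  · rw [← h, Real.zero_rpow (ne_of_gt h1ρ), zero_mul]
  · rw [Real.rpow_add h, Real.rpow_one]


lemma sum_biUnion_le {α β : Type*} [DecidableEq α] (T : Finset β) (U : β → Finset α)
    (f : α → ℝ) (hf : ∀ a, 0 ≤ f a) :
    ∑ a ∈ T.biUnion U, f a ≤ ∑ t ∈ T, ∑ a ∈ U t, f a := by
  induction T using Finset.induction with
  | empty => simp
  | @insert t T ht ih =>
      rw [Finset.biUnion_insert, Finset.sum_insert ht]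
      have h := Finset.sum_union_inter (s₁ := U t) (s₂ := T.biUnion U) (f := f)
      have h2 : 0 ≤ ∑ a ∈ U t ∩ T.biUnion U, f a := Finset.sum_nonneg fun a _ => hf a
      have hun : ∑ a ∈ U t ∪ T.biUnion U, f a ≤ ∑ a ∈ U t, f a + ∑ a ∈ T.biUnion U, f a := by
        linarith
      exact hun.trans (add_le_add (le_refl _) ih)

lemma sum_le_cover {α β : Type*} [DecidableEq α] (T : Finset β) (U : β → Finset α)
    (s : Finset α) (f : α → ℝ) (hf : ∀ a, 0 ≤ f a)
    (hcov : ∀ a ∈ s, ∃ t ∈ T, a ∈ U t) :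
    ∑ a ∈ s, f a ≤ ∑ t ∈ T, ∑ a ∈ U t, f a :=
  le_trans
    (Finset.sum_le_sum_of_subset_of_nonneg
      (fun a ha => Finset.mem_biUnion.mpr (hcov a ha)) (fun a _ _ => hf a))
    (sum_biUnion_le T U f hf)

lemma main_bound (p : X × Y → ℝ) (hp : IsPMF p) (m : ℕ) (hm : 2 ≤ m)
    {ρ : ℝ} (hρ0 : 0 ≤ ρ) (hρ1 : ρ ≤ 1) {E : ℝ}
    (hEeq : E = ρ * Real.log m -
      Real.log (∑ y, (∑ x, p (x, y) ^ (1 / (1 + ρ))) ^ (1 + ρ)))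
    (hE : 0 < E) (n : ℕ) (hn : 1 ≤ n) (Δ : ℕ) (hΔ : Δ ≤ n - 1) :
    prob (fun ω : (Fin n → X × Y) × BinScheme X n m =>
        (∏ i, p (ω.1 i)) / (Fintype.card (BinScheme X n m) : ℝ))
      (fun ω => ∃ x' : Fin n → X,
        sameBin ω.2 x' (fun i => (ω.1 i).1) ∧
        (∃ i : Fin n, (i : ℕ) < n - Δ ∧ x' i ≠ (ω.1 i).1) ∧
        (∏ i, p (ω.1 i)) ≤ (∏ i, p (x' i, (ω.1 i).2)))
      ≤ (1 - Real.exp (-E))⁻¹ * Real.exp (-(Δ : ℝ) * E) := by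
  classical
  have hm0 : (0:ℝ) < m := by exact_mod_cast (by omega : 0 < m)
  have h1ρ : (0:ℝ) < 1 + ρ := by linarith
  set q : ℝ := 1/(1+ρ) with hqdef
  have hq0 : 0 < q := by positivity
  set G : ℝ := ∑ y, (∑ x, p (x, y) ^ q) ^ (1+ρ) with hGdef
  have hGpos : 0 < G := F_pos p hp (by linarith)
  set M : ℕ := n - Δ with hMdef
  have hM1 : 1 ≤ M := by omega
  set N : ℕ := Fintype.card (BinScheme X n m) with hNdef
  have hNpos : 0 < N := Fintype.card_pos_iff.mpr ⟨fun j _ => ⟨0, by omega⟩⟩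
  have hNR : (0:ℝ) < N := by exact_mod_cast hNpos
  set r : ℝ := Real.exp (-E) with hrdef
  have hr0 : 0 < r := Real.exp_pos _
  have hr1 : r < 1 := by
    rw [hrdef]
    calc Real.exp (-E) < Real.exp 0 := Real.exp_lt_exp.mpr (by linarith)
      _ = 1 := Real.exp_zero
  have hrval : (m:ℝ)⁻¹ ^ ρ * G = r := by
    rw [hrdef, Real.rpow_def_of_pos (inv_pos.mpr hm0), Real.log_inv,
      ← Real.exp_log hGpos, ← Real.exp_add, hEeq]
    congr 1
    ring
  set A : (Fin n → X × Y) × BinScheme X n m → Prop := fun ω => ∃ x' : Fin n → X,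
      sameBin ω.2 x' (fun i => (ω.1 i).1) ∧
      (∃ i : Fin n, (i : ℕ) < n - Δ ∧ x' i ≠ (ω.1 i).1) ∧
      (∏ i, p (ω.1 i)) ≤ (∏ i, p (x' i, (ω.1 i).2)) with hA
  -- Step A : rewrite prob as a double sum
  have hprob : prob (fun ω : (Fin n → X × Y) × BinScheme X n m =>
        (∏ i, p (ω.1 i)) / (N : ℝ)) A
      = ∑ w : Fin n → X × Y, (∏ i, p (w i)) *
          ((∑ b : BinScheme X n m, if A (w, b) then (1:ℝ) else 0) / (N:ℝ)) := by
    rw [prob, Fintype.sum_prod_type]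
    refine Finset.sum_congr rfl (fun w _ => ?_)
    dsimp only
    conv_rhs => rw [Finset.sum_div, Finset.mul_sum]
    refine Finset.sum_congr rfl (fun b _ => ?_)
    by_cases hc : A (w, b) <;> simp [hc, div_eq_mul_inv]
  -- nonnegativity facts
  have heinn : ∀ (t : ℕ) (w : Fin n → X × Y) (i : Fin n),
      0 ≤ (if (i:ℕ) < t then (1:ℝ) else (∑ a, p (a, (w i).2) ^ q) / (p (w i)) ^ q) := by
    intro t w i
    split
    · norm_num
    · exact div_nonneg (Finset.sum_nonneg fun a _ => Real.rpow_nonneg (hp.1 _) _)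
        (Real.rpow_nonneg (hp.1 _) _)
  have hDnn : ∀ (t : ℕ) (w : Fin n → X × Y),
      0 ≤ ∏ i : Fin n, (if (i:ℕ) < t then (1:ℝ) else (∑ a, p (a, (w i).2) ^ q) / (p (w i)) ^ q) :=
    fun t w => Finset.prod_nonneg fun i _ => heinn t w i
  -- Step B : the per-w bound
  have hkey : ∀ w : Fin n → X × Y, 0 < ∏ i, p (w i) →
      (∑ b : BinScheme X n m, if A (w, b) then (1:ℝ) else 0) / (N:ℝ)
        ≤ ∑ t ∈ Finset.range M, ((m:ℝ)⁻¹ ^ (n - t)) ^ ρ *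
            (∏ i : Fin n, (if (i:ℕ) < t then (1:ℝ)
              else (∑ a, p (a, (w i).2) ^ q) / (p (w i)) ^ q)) ^ ρ := by
    intro w hP0
    have hcoordne : ∀ i, p (w i) ≠ 0 := by
      intro i h
      rw [Finset.prod_eq_zero (Finset.mem_univ i) h] at hP0
      exact lt_irrefl 0 hP0
    have hcoord : ∀ i, 0 < p (w i) := fun i => lt_of_le_of_ne (hp.1 _) (Ne.symm (hcoordne i))
    set xsw : Fin n → X := fun i => (w i).1 with hxsw
    set f : (Fin n → X) → ℝ := fun x' =>
      ∏ j : Fin n, (if pref x' j = pref xsw j then (1:ℝ) else (m:ℝ)⁻¹) with hfdef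
    have hf_nn : ∀ x', 0 ≤ f x' :=
      fun x' => Finset.prod_nonneg (fun j _ => by split <;> positivity)
    set Ratio : (Fin n → X) → ℝ := fun x' =>
      ∏ i : Fin n, ((p (x' i, (w i).2)) / (p (w i))) ^ q with hRatio
    have hRatio_nn : ∀ x', 0 ≤ Ratio x' :=
      fun x' => Finset.prod_nonneg (fun i _ => Real.rpow_nonneg (div_nonneg (hp.1 _) (hp.1 _)) _)
    set Sfin : Finset (Fin n → X) := Finset.univ.filter (fun x' =>
      (∃ i : Fin n, (i : ℕ) < n - Δ ∧ x' i ≠ (w i).1) ∧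
      (∏ i, p (w i)) ≤ ∏ i, p (x' i, (w i).2)) with hSfin
    -- union bound on indicators
    have hind : ∀ b : BinScheme X n m, (if A (w, b) then (1:ℝ) else 0)
        ≤ ∑ x' ∈ Sfin, (if sameBin b x' xsw then (1:ℝ) else 0) := by
      intro b
      by_cases hA' : A (w, b)
      · rw [if_pos hA']
        obtain ⟨x', hsb, hdiff, hle⟩ := hA'
        have hmem : x' ∈ Sfin := by
          rw [hSfin, Finset.mem_filter]
          exact ⟨Finset.mem_univ _, hdiff, hle⟩
        have h1 : (1:ℝ) = (if sameBin b x' xsw then (1:ℝ) else 0) := by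
          rw [if_pos hsb]
        refine h1.le.trans (Finset.single_le_sum
          (f := fun x'' => if sameBin b x'' xsw then (1:ℝ) else 0) (fun x'' _ => ?_) hmem)
        by_cases h : sameBin b x'' xsw <;> simp [h]
      · rw [if_neg hA']
        exact Finset.sum_nonneg fun x'' _ => by split <;> norm_num
    have hQle : (∑ b : BinScheme X n m, if A (w, b) then (1:ℝ) else 0) / (N:ℝ)
        ≤ ∑ x' ∈ Sfin, f x' := by
      have h1 : (∑ b : BinScheme X n m, if A (w, b) then (1:ℝ) else 0)
          ≤ ∑ b : BinScheme X n m, ∑ x' ∈ Sfin, (if sameBin b x' xsw then (1:ℝ) else 0) :=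
        Finset.sum_le_sum (fun b _ => hind b)
      rw [Finset.sum_comm] at h1
      have h2 : ∀ x' ∈ Sfin, (∑ b : BinScheme X n m, if sameBin b x' xsw then (1:ℝ) else 0)
          = (N:ℝ) * f x' := fun x' _ => bin_count (by omega) x' xsw
      rw [Finset.sum_congr rfl h2, ← Finset.mul_sum] at h1
      rw [div_le_iff₀ hNR, mul_comm (∑ x' ∈ Sfin, f x') (N:ℝ)]
      exact h1
    have hQ1 : (∑ b : BinScheme X n m, if A (w, b) then (1:ℝ) else 0) / (N:ℝ) ≤ 1 := by
      rw [div_le_one hNR]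
      calc (∑ b : BinScheme X n m, if A (w, b) then (1:ℝ) else 0)
          ≤ ∑ _b : BinScheme X n m, (1:ℝ) :=
            Finset.sum_le_sum (fun b _ => by split <;> norm_num)
        _ = (N:ℝ) := by
            rw [Finset.sum_const, Finset.card_univ, ← hNdef, nsmul_eq_mul, mul_one]
    -- the covering family
    set U : ℕ → Finset (Fin n → X) := fun t => Finset.univ.filter (fun x' =>
      (∀ i : Fin n, (i:ℕ) < t → x' i = xsw i) ∧
      (∃ ht : t < n, x' ⟨t, ht⟩ ≠ xsw ⟨t, ht⟩) ∧
      (∏ i, p (w i)) ≤ ∏ i, p (x' i, (w i).2)) with hU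
    have hcover : ∀ x' ∈ Sfin, ∃ t ∈ Finset.range M, x' ∈ U t := by
      intro x' hx'
      rw [hSfin, Finset.mem_filter] at hx'
      obtain ⟨-, ⟨i0, hi0M, hi0ne⟩, hle⟩ := hx'
      have hi0ne' : x' i0 ≠ xsw i0 := hi0ne
      have H : ∃ k, ∃ hk : k < n, x' ⟨k, hk⟩ ≠ xsw ⟨k, hk⟩ :=
        ⟨i0.val, i0.isLt, by simpa [Fin.eta] using hi0ne'⟩
      obtain ⟨htn, htne⟩ := Nat.find_spec H
      refine ⟨Nat.find H, ?_, ?_⟩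
      · rw [Finset.mem_range]
        have h3 : Nat.find H ≤ i0.val := Nat.find_le ⟨i0.isLt, by simpa [Fin.eta] using hi0ne'⟩
        omega
      · rw [hU, Finset.mem_filter]
        refine ⟨Finset.mem_univ _, ?_, ⟨htn, htne⟩, hle⟩
        intro i hit
        by_contra hne
        exact Nat.find_min H hit ⟨i.isLt, by simpa [Fin.eta] using hne⟩
    -- bound on U t elements
    have hUbound : ∀ t, t ∈ Finset.range M → ∀ x' ∈ U t,
        f x' ≤ (m:ℝ)⁻¹ ^ (n - t) * Ratio x' := by
      intro t htM x' hx'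
      rw [hU, Finset.mem_filter] at hx'
      obtain ⟨-, hpre, ⟨htn, htne⟩, hle⟩ := hx'
      have hfx : f x' = (m:ℝ)⁻¹ ^ (n - t) := by
        rw [hfdef]
        dsimp only
        rw [← prod_ite_lt n t (m:ℝ)⁻¹]
        refine Finset.prod_congr rfl (fun j _ => ?_)
        by_cases hjt : (j:ℕ) < t
        · rw [if_pos hjt, if_pos]
          rw [pref_eq_iff]
          intro i hij
          exact hpre i (by omega)
        · rw [if_neg hjt, if_neg]
          rw [pref_eq_iff]
          push_neg
          exact ⟨⟨t, htn⟩, by simpa using Nat.le_of_not_lt hjt, htne⟩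
      have hRge1 : 1 ≤ Ratio x' := by
        rw [hRatio]
        dsimp only
        rw [Real.finset_prod_rpow _ _ (fun i _ => div_nonneg (hp.1 _) (hp.1 _)) q]
        refine Real.one_le_rpow ?_ (le_of_lt hq0)
        rw [Finset.prod_div_distrib]
        exact (one_le_div hP0).mpr hle
      calc f x' = (m:ℝ)⁻¹ ^ (n - t) * 1 := by rw [hfx, mul_one]
        _ ≤ (m:ℝ)⁻¹ ^ (n - t) * Ratio x' := by
            have : (0:ℝ) ≤ (m:ℝ)⁻¹ ^ (n - t) := by positivity
            exact mul_le_mul_of_nonneg_left hRge1 this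
    -- sum over the prefix-constrained set
    have hTeq : ∀ t : ℕ,
        (∑ x' ∈ Finset.univ.filter
            (fun x' : Fin n → X => ∀ i : Fin n, (i:ℕ) < t → x' i = xsw i), Ratio x')
          = ∏ i : Fin n, (if (i:ℕ) < t then (1:ℝ)
              else (∑ a, p (a, (w i).2) ^ q) / (p (w i)) ^ q) := by
      intro t
      rw [Finset.sum_filter]
      have hpt : ∀ x' : Fin n → X,
          (if (∀ i : Fin n, (i:ℕ) < t → x' i = xsw i) then Ratio x' else 0)
            = ∏ i : Fin n, ((if (i:ℕ) < t then (if x' i = xsw i then (1:ℝ) else 0) else 1) *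
                ((p (x' i, (w i).2)) / (p (w i))) ^ q) := by
        intro x'
        by_cases hcond : ∀ i : Fin n, (i:ℕ) < t → x' i = xsw i
        · rw [if_pos hcond, Finset.prod_mul_distrib]
          have hone : (∏ i : Fin n,
              (if (i:ℕ) < t then (if x' i = xsw i then (1:ℝ) else 0) else 1)) = 1 :=
            Finset.prod_eq_one (fun i _ => by
              by_cases h : (i:ℕ) < t
              · rw [if_pos h, if_pos (hcond i h)]
              · rw [if_neg h])
          rw [hone, one_mul, hRatio]
        · rw [if_neg hcond]
          push_neg at hcond
          obtain ⟨i0, hi0t, hi0ne⟩ := hcond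
          refine (Finset.prod_eq_zero (Finset.mem_univ i0) ?_).symm
          rw [if_pos hi0t, if_neg hi0ne, zero_mul]
      rw [Finset.sum_congr rfl (fun x' _ => hpt x')]
      have hswap3 : (∑ x' : Fin n → X, ∏ i : Fin n,
            ((if (i:ℕ) < t then (if x' i = xsw i then (1:ℝ) else 0) else 1) *
              ((p (x' i, (w i).2)) / (p (w i))) ^ q))
          = ∏ i : Fin n, ∑ a : X,
            ((if (i:ℕ) < t then (if a = xsw i then (1:ℝ) else 0) else 1) *
              ((p (a, (w i).2)) / (p (w i))) ^ q) := by
        conv_rhs => rw [Finset.prod_univ_sum]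
        rw [Fintype.piFinset_univ]
      rw [hswap3]
      refine Finset.prod_congr rfl (fun i _ => ?_)
      by_cases hit : (i:ℕ) < t
      · simp only [hit, if_true, ite_mul, one_mul, zero_mul]
        rw [Finset.sum_ite_eq' Finset.univ (xsw i)
            (fun a => ((p (a, (w i).2)) / (p (w i))) ^ q)]
        simp only [Finset.mem_univ, if_true, hxsw]
        rw [Prod.mk.eta, div_self (hcoordne i), Real.one_rpow]
      · simp only [hit, if_false, one_mul]
        have : ∀ a : X, ((p (a, (w i).2)) / (p (w i))) ^ q
            = (p (a, (w i).2)) ^ q / (p (w i)) ^ q :=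
          fun a => Real.div_rpow (hp.1 _) (hp.1 _) q
        rw [Finset.sum_congr rfl (fun a _ => this a), ← Finset.sum_div]
    -- assembling the per-w bound
    have hsum_main : ∑ x' ∈ Sfin, f x'
        ≤ ∑ t ∈ Finset.range M, (m:ℝ)⁻¹ ^ (n - t) *
            (∏ i : Fin n, (if (i:ℕ) < t then (1:ℝ)
              else (∑ a, p (a, (w i).2) ^ q) / (p (w i)) ^ q)) := by
      calc ∑ x' ∈ Sfin, f x' ≤ ∑ t ∈ Finset.range M, ∑ x' ∈ U t, f x' :=
            sum_le_cover _ _ _ _ hf_nn hcover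
        _ ≤ ∑ t ∈ Finset.range M, (m:ℝ)⁻¹ ^ (n - t) *
            (∏ i : Fin n, (if (i:ℕ) < t then (1:ℝ)
              else (∑ a, p (a, (w i).2) ^ q) / (p (w i)) ^ q)) := by
            refine Finset.sum_le_sum (fun t htM => ?_)
            calc ∑ x' ∈ U t, f x' ≤ ∑ x' ∈ U t, (m:ℝ)⁻¹ ^ (n - t) * Ratio x' :=
                  Finset.sum_le_sum (fun x' hx' => hUbound t htM x' hx')
              _ = (m:ℝ)⁻¹ ^ (n - t) * ∑ x' ∈ U t, Ratio x' := by rw [← Finset.mul_sum]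
              _ ≤ (m:ℝ)⁻¹ ^ (n - t) * ∑ x' ∈ Finset.univ.filter
                    (fun x' : Fin n → X => ∀ i : Fin n, (i:ℕ) < t → x' i = xsw i), Ratio x' := by
                  refine mul_le_mul_of_nonneg_left ?_ (by positivity)
                  refine Finset.sum_le_sum_of_subset_of_nonneg ?_ (fun x' _ _ => hRatio_nn x')
                  intro x' hx'
                  rw [hU, Finset.mem_filter] at hx'
                  rw [Finset.mem_filter]
                  exact ⟨Finset.mem_univ _, hx'.2.1⟩
              _ = (m:ℝ)⁻¹ ^ (n - t) *
                  (∏ i : Fin n, (if (i:ℕ) < t then (1:ℝ)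
                    else (∑ a, p (a, (w i).2) ^ q) / (p (w i)) ^ q)) := by rw [hTeq t]
    -- min / rpow chain
    have hS2nn : 0 ≤ ∑ t ∈ Finset.range M, (m:ℝ)⁻¹ ^ (n - t) *
        (∏ i : Fin n, (if (i:ℕ) < t then (1:ℝ)
          else (∑ a, p (a, (w i).2) ^ q) / (p (w i)) ^ q)) :=
      Finset.sum_nonneg fun t _ => mul_nonneg (by positivity) (hDnn t w)
    calc (∑ b : BinScheme X n m, if A (w, b) then (1:ℝ) else 0) / (N:ℝ)
        ≤ min 1 (∑ t ∈ Finset.range M, (m:ℝ)⁻¹ ^ (n - t) *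
            (∏ i : Fin n, (if (i:ℕ) < t then (1:ℝ)
              else (∑ a, p (a, (w i).2) ^ q) / (p (w i)) ^ q))) :=
          le_min hQ1 (hQle.trans hsum_main)
      _ ≤ (∑ t ∈ Finset.range M, (m:ℝ)⁻¹ ^ (n - t) *
            (∏ i : Fin n, (if (i:ℕ) < t then (1:ℝ)
              else (∑ a, p (a, (w i).2) ^ q) / (p (w i)) ^ q))) ^ ρ :=
          min_one_le_rpow hS2nn hρ0 hρ1
      _ ≤ ∑ t ∈ Finset.range M, ((m:ℝ)⁻¹ ^ (n - t) *
            (∏ i : Fin n, (if (i:ℕ) < t then (1:ℝ)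
              else (∑ a, p (a, (w i).2) ^ q) / (p (w i)) ^ q))) ^ ρ :=
          rpow_sum_le _ ⟨0, Finset.mem_range.mpr hM1⟩ _
            (fun t _ => mul_nonneg (by positivity) (hDnn t w)) hρ0 hρ1
      _ = ∑ t ∈ Finset.range M, ((m:ℝ)⁻¹ ^ (n - t)) ^ ρ *
            (∏ i : Fin n, (if (i:ℕ) < t then (1:ℝ)
              else (∑ a, p (a, (w i).2) ^ q) / (p (w i)) ^ q)) ^ ρ := by
          refine Finset.sum_congr rfl (fun t _ => ?_)
          exact Real.mul_rpow (by positivity) (hDnn t w)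
  -- Step C : factorization of the w-sum
  have hGt : ∀ t : ℕ,
      (∑ w : Fin n → X × Y, (∏ i, p (w i)) *
          (∏ i : Fin n, (if (i:ℕ) < t then (1:ℝ)
            else (∑ a, p (a, (w i).2) ^ q) / (p (w i)) ^ q)) ^ ρ)
        = G ^ (n - t) := by
    intro t
    have hstep1 : ∀ w : Fin n → X × Y, (∏ i, p (w i)) *
        (∏ i : Fin n, (if (i:ℕ) < t then (1:ℝ)
          else (∑ a, p (a, (w i).2) ^ q) / (p (w i)) ^ q)) ^ ρ
        = ∏ i : Fin n, (p (w i) * ((if (i:ℕ) < t then (1:ℝ)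
            else (∑ a, p (a, (w i).2) ^ q) / (p (w i)) ^ q)) ^ ρ) := by
      intro w
      rw [← Real.finset_prod_rpow _ _ (fun i _ => heinn t w i) ρ, Finset.prod_mul_distrib]
    rw [Finset.sum_congr rfl (fun w _ => hstep1 w)]
    have hswap2 : (∑ w : Fin n → X × Y, ∏ i : Fin n,
          (p (w i) * ((if (i:ℕ) < t then (1:ℝ)
            else (∑ a, p (a, (w i).2) ^ q) / (p (w i)) ^ q)) ^ ρ))
        = ∏ i : Fin n, ∑ z : X × Y, (p z * ((if (i:ℕ) < t then (1:ℝ)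
            else (∑ a, p (a, z.2) ^ q) / (p z) ^ q)) ^ ρ) := by
      conv_rhs => rw [Finset.prod_univ_sum]
      rw [Fintype.piFinset_univ]
    rw [hswap2]
    have hfac : ∀ i : Fin n, (∑ z : X × Y, (p z * ((if (i:ℕ) < t then (1:ℝ)
        else (∑ a, p (a, z.2) ^ q) / (p z) ^ q)) ^ ρ)) = if (i:ℕ) < t then (1:ℝ) else G := by
      intro i
      by_cases hit : (i:ℕ) < t
      · simp only [hit, if_true, Real.one_rpow, mul_one]
        exact hp.2
      · simp only [hit, if_false]
        exact sum_G p hp hρ0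
    rw [Finset.prod_congr rfl (fun i _ => hfac i)]
    exact prod_ite_lt n t G
  -- Step D : final assembly
  calc prob (fun ω : (Fin n → X × Y) × BinScheme X n m =>
        (∏ i, p (ω.1 i)) / (N : ℝ)) A
      = ∑ w : Fin n → X × Y, (∏ i, p (w i)) *
          ((∑ b : BinScheme X n m, if A (w, b) then (1:ℝ) else 0) / (N:ℝ)) := hprob
    _ ≤ ∑ w : Fin n → X × Y, (∏ i, p (w i)) *
          (∑ t ∈ Finset.range M, ((m:ℝ)⁻¹ ^ (n - t)) ^ ρ *
            (∏ i : Fin n, (if (i:ℕ) < t then (1:ℝ)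
              else (∑ a, p (a, (w i).2) ^ q) / (p (w i)) ^ q)) ^ ρ) := by
        refine Finset.sum_le_sum (fun w _ => ?_)
        rcases (Finset.prod_nonneg (fun i (_ : i ∈ Finset.univ) => hp.1 (w i))).eq_or_lt with h | h
        · rw [← h, zero_mul, zero_mul]
        · exact mul_le_mul_of_nonneg_left (hkey w h) (le_of_lt h)
    _ = ∑ t ∈ Finset.range M, ((m:ℝ)⁻¹ ^ (n - t)) ^ ρ *
          (∑ w : Fin n → X × Y, (∏ i, p (w i)) *
            (∏ i : Fin n, (if (i:ℕ) < t then (1:ℝ)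
              else (∑ a, p (a, (w i).2) ^ q) / (p (w i)) ^ q)) ^ ρ) := by
        rw [Finset.sum_congr rfl (fun w (_ : w ∈ Finset.univ) => Finset.mul_sum _ _ _)]
        rw [Finset.sum_comm]
        refine Finset.sum_congr rfl (fun t _ => ?_)
        rw [Finset.mul_sum]
        refine Finset.sum_congr rfl (fun w _ => ?_)
        ring
    _ = ∑ t ∈ Finset.range M, r ^ (n - t) := by
        refine Finset.sum_congr rfl (fun t _ => ?_)
        rw [hGt t, pow_rpow_comm (by positivity) (n - t) ρ, ← mul_pow, hrval]
    _ = r ^ Δ * ∑ t ∈ Finset.range M, r ^ (M - t) := by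
        rw [Finset.mul_sum]
        refine Finset.sum_congr rfl (fun t htM => ?_)
        rw [Finset.mem_range] at htM
        rw [← pow_add]
        congr 1
        omega
    _ ≤ r ^ Δ * (1 - r)⁻¹ := by
        refine mul_le_mul_of_nonneg_left (geom_le (le_of_lt hr0) hr1 M) (by positivity)
    _ = (1 - Real.exp (-E))⁻¹ * Real.exp (-(Δ : ℝ) * E) := by
        rw [hrdef, ← Real.exp_nat_mul]
        rw [mul_comm]
        congr 2
        ring

end St4

/-- Streaming source coding with decoder side information, ML decoding (Theorem 4). -/
theorem statement4 {X Y : Type*} [Fintype X] [Fintype Y] [DecidableEq X]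
    [Nonempty X] [Nonempty Y]
    (p : X × Y → ℝ) (hp : IsPMF p)
    (m : ℕ) (hm : 2 ≤ m) (R : ℝ) (hR : R = Real.log m) (hRH : condEntXY p < R) :
    ∃ K : ℝ, 0 < K ∧
      ∀ n : ℕ, 1 ≤ n → ∀ Δ : ℕ, Δ ≤ n - 1 →
        prob
          (fun ω : (Fin n → X × Y) × BinScheme X n m =>
            (∏ i, p (ω.1 i)) / (Fintype.card (BinScheme X n m) : ℝ))
          (fun ω => ∃ x' : Fin n → X,
            sameBin ω.2 x' (fun i => (ω.1 i).1) ∧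
            (∃ i : Fin n, (i : ℕ) < n - Δ ∧ x' i ≠ (ω.1 i).1) ∧
            (∏ i, p (ω.1 i)) ≤ (∏ i, p (x' i, (ω.1 i).2)))
        ≤ K * Real.exp (-(Δ : ℝ) * EMLSI p R) := by
  obtain ⟨ρs, hρs, hEeq, hEpos⟩ := St4.exists_max p hp R hRH
  have hexplt : Real.exp (-(EMLSI p R)) < 1 := by
    calc Real.exp (-(EMLSI p R)) < Real.exp 0 := Real.exp_lt_exp.mpr (by linarith)
      _ = 1 := Real.exp_zero
  have hden : 0 < 1 - Real.exp (-(EMLSI p R)) := by linarith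
  refine ⟨(1 - Real.exp (-(EMLSI p R)))⁻¹, inv_pos.mpr hden, ?_⟩
  intro n hn Δ hΔ
  have hEeq' : EMLSI p R = ρs * Real.log m -
      Real.log (∑ y, (∑ x, p (x, y) ^ (1 / (1 + ρs))) ^ (1 + ρs)) := by
    rw [hEeq, hR]
  exact St4.main_bound p hp m hm hρs.1 hρs.2 hEeq' hEpos n hn Δ hΔ
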